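/- arXiv:2509.15571 — 3 statements merged into one kernel-verified Lean document; each statement's English description precedes it below -/
import Mathlib

section
/- Let (μ_n) be a sequence of Borel probability measures on ℝ^d converging narrowly to a Borel probability measure μ (i.e., ∫ f dμ_n → ∫ f dμ for every bounded continuous f). Suppose each μ_n is absolutely continuous with respect to Lebesgue measure with density ρ_n, and that liminf_{n→∞} ∫ ρ_n² dλ < ∞. Then μ is absolutely continuous with respect to Lebesgue measure, and its density ρ satisfies ∫ ρ² dλ ≤ liminf_{n→∞} ∫ ρ_n² dλ. -/
open MeasureTheory Filter Topology

open scoped ENNReal BoundedContinuousFunction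

section StmtAux

open BoundedContinuousFunction

lemma two_mul_le_sq_add' (a b : ℝ≥0∞) : 2 * (a * b) ≤ a ^ 2 + b ^ 2 := by
  rcases le_total a b with h | h
  · obtain ⟨c, rfl⟩ := exists_add_of_le h
    have h2 : a ^ 2 + (a + c) ^ 2 = 2 * (a * (a + c)) + c ^ 2 := by ring
    rw [h2]; exact le_self_add
  · obtain ⟨c, rfl⟩ := exists_add_of_le h
    have h2 : (b + c) ^ 2 + b ^ 2 = 2 * ((b + c) * b) + c ^ 2 := by ring
    rw [h2]; exact le_self_add


lemma clamp_abs {a b k : ℝ} (hb0 : 0 ≤ b) (hbk : b ≤ k) :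
    |b - min (max a 0) k| ≤ |b - a| := by
  rcases le_total a 0 with h | h
  · rw [max_eq_right h, min_eq_left (hb0.trans hbk)]
    rw [sub_zero, abs_of_nonneg hb0, abs_of_nonneg (by linarith)]
    linarith
  · rcases le_total a k with h2 | h2
    · rw [max_eq_left h, min_eq_left h2]
    · rw [max_eq_left h, min_eq_right h2]
      rw [abs_of_nonpos (by linarith), abs_of_nonpos (by linarith)]
      linarith

lemma ofReal_pow_two_le (t : ℝ) : (ENNReal.ofReal t) ^ 2 ≤ ENNReal.ofReal (t ^ 2) := by
  rcases le_total t 0 with h | h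
  · simp [ENNReal.ofReal_of_nonpos h]
  · rw [← ENNReal.ofReal_pow h]

lemma iSup_sq_of_monotone {a : ℕ → ℝ≥0∞} (ha : Monotone a) :
    (⨆ k, a k) ^ 2 = ⨆ k, (a k) ^ 2 := by
  refine le_antisymm ?_ (iSup_le fun k => pow_le_pow_left' (le_iSup a k) 2)
  have : (⨆ k, a k) ^ 2 = (⨆ k, a k) * (⨆ k, a k) := sq _
  rw [this, ENNReal.iSup_mul]
  refine iSup_le fun i => ?_
  rw [ENNReal.mul_iSup]
  refine iSup_le fun j => ?_
  calc a i * a j ≤ a (max i j) * a (max i j) :=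
        mul_le_mul' (ha (le_max_left _ _)) (ha (le_max_right _ _))
    _ = a (max i j) ^ 2 := (sq _).symm
    _ ≤ ⨆ k, (a k) ^ 2 := le_iSup (fun k => (a k)^2) (max i j)

lemma lintegral_sq_le_of_eLpNorm_le {α : Type*} [MeasurableSpace α] {μ : Measure α}
    {f : α → ℝ} {c : ℝ≥0∞} (h : eLpNorm f 2 μ ≤ c) :
    ∫⁻ x, ENNReal.ofReal ((f x) ^ 2) ∂μ ≤ c ^ 2 := by
  rw [eLpNorm_eq_lintegral_rpow_enorm_toReal (by norm_num) (by norm_num)] at h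
  have ht : (2:ℝ≥0∞).toReal = (2:ℝ) := by norm_num
  rw [ht] at h
  have h3 : (∫⁻ x, (‖f x‖₊ : ℝ≥0∞) ^ (2:ℝ) ∂μ) ≤ c ^ (2:ℝ) := by
    have h2 := ENNReal.rpow_le_rpow h (by norm_num : (0:ℝ) ≤ 2)
    rwa [← ENNReal.rpow_mul, one_div, inv_mul_cancel₀ (two_ne_zero), ENNReal.rpow_one] at h2
  have e : ∀ x, ENNReal.ofReal (f x ^ 2) = (‖f x‖₊ : ℝ≥0∞) ^ (2:ℝ) := by
    intro x
    rw [show (f x)^2 = |f x|^2 by rw [sq_abs], ENNReal.ofReal_pow (abs_nonneg _),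
      ← Real.norm_eq_abs, ofReal_norm, ← ENNReal.rpow_natCast]
    norm_num
    rfl
  rw [lintegral_congr e, show (c:ℝ≥0∞)^2 = c ^ (2:ℝ) by rw [← ENNReal.rpow_natCast]; norm_num]
  exact h3

lemma sq_add_sq_eq'' (a b : ℝ≥0∞) (hab : a ≤ b) :
    a ^ 2 + b ^ 2 = 2 * (a * b) + (a - b) ^ 2 + (b - a) ^ 2 := by
  rcases eq_or_ne a ⊤ with rfl | ha
  · have : b = ⊤ := top_le_iff.mp hab
    subst this; simp
  · obtain ⟨c, rfl⟩ := exists_add_of_le hab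
    rw [tsub_eq_zero_of_le (le_add_right le_rfl), ENNReal.add_sub_cancel_left ha]
    ring

lemma sq_add_sq_eq (a b : ℝ≥0∞) :
    a ^ 2 + b ^ 2 = 2 * (a * b) + (a - b) ^ 2 + (b - a) ^ 2 := by
  rcases le_total a b with h | h
  · exact sq_add_sq_eq'' a b h
  · have := sq_add_sq_eq'' b a h
    rw [add_comm (b^2), mul_comm b a] at this
    rw [this]; ring

lemma bound_lemma {d : ℕ} (g : (Fin d → ℝ) → ℝ≥0∞) (hg : Measurable g) (L : ℝ≥0∞) (hL : L ≠ ⊤)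
    (star2 : ∀ f : (Fin d → ℝ) → ℝ, Continuous f → HasCompactSupport f → (∀ x, 0 ≤ f x) →
      2 * ∫⁻ x, g x * ENNReal.ofReal (f x) ≤ (∫⁻ x, (ENNReal.ofReal (f x)) ^ 2) + L) :
    ∫⁻ x, g x ^ 2 ≤ L := by
  set ρ : ℕ → (Fin d → ℝ) → ℝ≥0∞ :=
    fun k x => (Metric.closedBall (0:(Fin d → ℝ)) k).indicator (fun x => min (g x) k) x with hρ
  have hρmeas : ∀ k, Measurable (ρ k) := fun k =>
    (hg.min measurable_const).indicator Metric.isClosed_closedBall.measurableSet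
  have hρ_le_g : ∀ k x, ρ k x ≤ g x := by
    intro k x
    simp only [hρ]
    by_cases hx : x ∈ Metric.closedBall (0:(Fin d → ℝ)) k
    · rw [Set.indicator_of_mem hx]; exact min_le_left _ _
    · rw [Set.indicator_of_notMem hx]; exact zero_le
  have hρ_le_k : ∀ k x, ρ k x ≤ (k:ℝ≥0∞) := by
    intro k x
    simp only [hρ]
    by_cases hx : x ∈ Metric.closedBall (0:(Fin d → ℝ)) k
    · rw [Set.indicator_of_mem hx]; exact min_le_right _ _
    · rw [Set.indicator_of_notMem hx]; exact zero_le
  have hρ_ne_top : ∀ k x, ρ k x ≠ ⊤ :=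
    fun k x => ne_top_of_le_ne_top (ENNReal.natCast_ne_top k) (hρ_le_k k x)
  have hmono : Monotone ρ := by
    intro i j hij x
    by_cases hx : x ∈ Metric.closedBall (0:(Fin d → ℝ)) i
    · simp only [hρ]
      rw [Set.indicator_of_mem hx, Set.indicator_of_mem
        (Metric.closedBall_subset_closedBall (by exact_mod_cast hij) hx)]
      exact min_le_min le_rfl (by exact_mod_cast hij)
    · simp only [hρ]
      rw [Set.indicator_of_notMem hx]; exact zero_le
  have hkey : ∀ k, (∫⁻ x, ρ k x ^ 2) ≤ L := by
    intro k
    set r : (Fin d → ℝ) → ℝ := fun x => (ρ k x).toReal with hr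
    have hr_meas : Measurable r := (hρmeas k).ennreal_toReal
    have hr0 : ∀ x, 0 ≤ r x := fun x => ENNReal.toReal_nonneg
    have hrk : ∀ x, r x ≤ (k:ℝ) := by
      intro x
      have := ENNReal.toReal_mono (ENNReal.natCast_ne_top k) (hρ_le_k k x)
      simpa using this
    have hofr : ∀ x, ENNReal.ofReal (r x) = ρ k x :=
      fun x => ENNReal.ofReal_toReal (hρ_ne_top k x)
    have hind : MemLp ((Metric.closedBall (0:(Fin d → ℝ)) k).indicator (fun _ => (k:ℝ))) 2
        volume := memLp_indicator_const 2 Metric.isClosed_closedBall.measurableSet _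
      (Or.inr (measure_closedBall_lt_top).ne)
    have hmem : MemLp r 2 volume := by
      refine hind.of_le hr_meas.aestronglyMeasurable (ae_of_all _ fun x => ?_)
      by_cases hx : x ∈ Metric.closedBall (0:(Fin d → ℝ)) k
      · rw [Set.indicator_of_mem hx]
        rw [Real.norm_eq_abs, Real.norm_eq_abs, abs_of_nonneg (hr0 x),
          abs_of_nonneg (by positivity : (0:ℝ) ≤ (k:ℝ))]
        exact hrk x
      · rw [Set.indicator_of_notMem hx]
        have : ρ k x = 0 := by
          simp only [hρ]; rw [Set.indicator_of_notMem hx]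
        simp [hr, this]
    apply ENNReal.le_of_forall_pos_le_add
    intro ε' hε' _
    set ε : ℝ := min 1 ((ε':ℝ)/2) with hε
    have hε0 : 0 < ε := lt_min one_pos (by positivity)
    have h2ε : 2 * ε^2 ≤ (ε':ℝ) := by
      have h1 : ε ≤ 1 := min_le_left _ _
      have h2 : ε ≤ (ε':ℝ)/2 := min_le_right _ _
      nlinarith
    obtain ⟨g₀, g₀supp, g₀norm, g₀cont, g₀mem⟩ :=
      hmem.exists_hasCompactSupport_eLpNorm_sub_le (by norm_num : (2:ℝ≥0∞) ≠ ⊤)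
        (ε := ENNReal.ofReal ε) (ENNReal.ofReal_pos.mpr hε0).ne'
    set g₁ : (Fin d → ℝ) → ℝ := fun x => min (max (g₀ x) 0) (k:ℝ) with hg₁
    have hg₁cont : Continuous g₁ := (g₀cont.max continuous_const).min continuous_const
    have hg₁supp : HasCompactSupport g₁ := by
      have he : g₁ = (fun y => min (max y 0) (k:ℝ)) ∘ g₀ := rfl
      rw [he]
      exact g₀supp.comp_left (by simp)
    have hg₁0 : ∀ x, 0 ≤ g₁ x := fun x => le_min (le_max_right _ _) (by positivity)
    have hg₁norm : eLpNorm (fun x => r x - g₁ x) 2 volume ≤ ENNReal.ofReal ε := by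
      refine le_trans (eLpNorm_mono fun x => ?_) g₀norm
      simp only [Pi.sub_apply, Real.norm_eq_abs]
      exact clamp_abs (hr0 x) (hrk x)
    have herr : ∫⁻ x, ENNReal.ofReal ((r x - g₁ x)^2) ≤ ENNReal.ofReal ε ^ 2 :=
      lintegral_sq_le_of_eLpNorm_le hg₁norm
    have hG₁meas : Measurable (fun x => ENNReal.ofReal (g₁ x)) :=
      ENNReal.measurable_ofReal.comp hg₁cont.measurable
    have hB_ne_top : (∫⁻ x, ENNReal.ofReal (g₁ x) ^ 2) ≠ ⊤ := by
      have hb : ∀ x, ENNReal.ofReal (g₁ x) ^ 2 ≤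
          (tsupport g₁).indicator (fun _ => ((k:ℝ≥0∞))^2) x := by
        intro x
        by_cases hx : x ∈ tsupport g₁
        · rw [Set.indicator_of_mem hx]
          refine pow_le_pow_left' ?_ 2
          rw [← ENNReal.ofReal_natCast k]
          exact ENNReal.ofReal_le_ofReal (min_le_right _ _)
        · rw [Set.indicator_of_notMem hx, image_eq_zero_of_notMem_tsupport hx]
          simp
      refine ne_top_of_le_ne_top ?_ (lintegral_mono hb)
      rw [lintegral_indicator_const (isClosed_tsupport g₁).measurableSet]
      exact ENNReal.mul_ne_top (by simp) hg₁supp.measure_lt_top.ne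
    have hid : (∫⁻ x, ρ k x ^ 2) + (∫⁻ x, ENNReal.ofReal (g₁ x) ^ 2)
        = 2 * (∫⁻ x, ρ k x * ENNReal.ofReal (g₁ x))
          + ((∫⁻ x, (ρ k x - ENNReal.ofReal (g₁ x))^2)
            + (∫⁻ x, (ENNReal.ofReal (g₁ x) - ρ k x)^2)) := by
      rw [← lintegral_add_left ((hρmeas k).pow_const 2)]
      rw [← lintegral_const_mul 2 (f := fun x => ρ k x * ENNReal.ofReal (g₁ x)) ((hρmeas k).mul hG₁meas)]
      rw [← lintegral_add_left (f := fun x => (ρ k x - ENNReal.ofReal (g₁ x))^2) (((hρmeas k).sub hG₁meas).pow_const 2)]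
      rw [← lintegral_add_left (f := fun x => 2 * (ρ k x * ENNReal.ofReal (g₁ x))) ((measurable_const.mul ((hρmeas k).mul hG₁meas)))]
      exact lintegral_congr fun x => by rw [sq_add_sq_eq]; ring
    have hcross : 2 * (∫⁻ x, ρ k x * ENNReal.ofReal (g₁ x))
        ≤ (∫⁻ x, ENNReal.ofReal (g₁ x) ^ 2) + L := by
      refine le_trans ?_ (star2 g₁ hg₁cont hg₁supp hg₁0)
      gcongr with x
      exact hρ_le_g k x
    have hsub1 : (∫⁻ x, (ρ k x - ENNReal.ofReal (g₁ x))^2) ≤ ENNReal.ofReal ε ^ 2 := by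
      refine le_trans (lintegral_mono fun x => ?_) herr
      rw [← hofr x, ← ENNReal.ofReal_sub _ (hg₁0 x)]
      exact ofReal_pow_two_le _
    have hsub2 : (∫⁻ x, (ENNReal.ofReal (g₁ x) - ρ k x)^2) ≤ ENNReal.ofReal ε ^ 2 := by
      refine le_trans (lintegral_mono fun x => ?_) herr
      rw [← hofr x, ← ENNReal.ofReal_sub _ (hr0 x),
        show (r x - g₁ x)^2 = (g₁ x - r x)^2 by ring]
      exact ofReal_pow_two_le _
    have hfinal : (∫⁻ x, ρ k x ^ 2) + (∫⁻ x, ENNReal.ofReal (g₁ x) ^ 2)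
        ≤ (L + 2 * ENNReal.ofReal ε ^ 2) + (∫⁻ x, ENNReal.ofReal (g₁ x) ^ 2) := by
      rw [hid]
      calc 2 * (∫⁻ x, ρ k x * ENNReal.ofReal (g₁ x))
            + ((∫⁻ x, (ρ k x - ENNReal.ofReal (g₁ x))^2)
              + (∫⁻ x, (ENNReal.ofReal (g₁ x) - ρ k x)^2))
          ≤ ((∫⁻ x, ENNReal.ofReal (g₁ x) ^ 2) + L)
            + (ENNReal.ofReal ε ^ 2 + ENNReal.ofReal ε ^ 2) :=
            add_le_add hcross (add_le_add hsub1 hsub2)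
        _ = (L + 2 * ENNReal.ofReal ε ^ 2) + (∫⁻ x, ENNReal.ofReal (g₁ x) ^ 2) := by ring
    have hA : (∫⁻ x, ρ k x ^ 2) ≤ L + 2 * ENNReal.ofReal ε ^ 2 :=
      (ENNReal.add_le_add_iff_right hB_ne_top).mp hfinal
    refine le_trans hA ?_
    gcongr
    calc 2 * ENNReal.ofReal ε ^ 2 = ENNReal.ofReal (2 * ε ^ 2) := by
          rw [ENNReal.ofReal_mul (by norm_num), ENNReal.ofReal_pow hε0.le,
            ENNReal.ofReal_ofNat]
      _ ≤ ENNReal.ofReal (ε':ℝ) := ENNReal.ofReal_le_ofReal h2ε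
      _ = (ε' : ℝ≥0∞) := ENNReal.ofReal_coe_nnreal
  have hsup : ∀ x, (⨆ k, ρ k x) = g x := by
    intro x
    refine le_antisymm (iSup_le fun k => hρ_le_g k x) ?_
    obtain ⟨N, hN⟩ := exists_nat_ge (dist x 0)
    have hmem : ∀ m : ℕ, N ≤ m → ρ m x = min (g x) m := by
      intro m hm
      simp only [hρ]
      rw [Set.indicator_of_mem (Metric.mem_closedBall.mpr (hN.trans (by exact_mod_cast hm)))]
    rcases eq_or_ne (g x) ⊤ with htop | hne
    · rw [htop]
      have hstep : ∀ n:ℕ, (n:ℝ≥0∞) ≤ ⨆ k, ρ k x := by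
        intro n
        calc (n:ℝ≥0∞) ≤ ((N+n:ℕ):ℝ≥0∞) := by exact_mod_cast Nat.le_add_left n N
          _ = ρ (N+n) x := by
              rw [hmem (N+n) (Nat.le_add_right N n), htop, min_eq_right le_top]
          _ ≤ ⨆ k, ρ k x := le_iSup (fun k => ρ k x) (N+n)
      calc (⊤:ℝ≥0∞) = ⨆ n:ℕ, (n:ℝ≥0∞) := ENNReal.iSup_natCast.symm
        _ ≤ ⨆ k, ρ k x := iSup_le hstep
    · obtain ⟨n, hn⟩ := ENNReal.exists_nat_gt hne
      have heq : ρ (max N n) x = g x := by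
        rw [hmem _ (le_max_left _ _), min_eq_left]
        exact le_trans hn.le (by exact_mod_cast le_max_right N n)
      rw [← heq]
      exact le_iSup (fun k => ρ k x) (max N n)
  calc (∫⁻ x, g x ^ 2) = ∫⁻ x, ⨆ k, ρ k x ^ 2 := by
        refine lintegral_congr fun x => ?_
        rw [← iSup_sq_of_monotone (fun i j hij => hmono hij x), hsup]
    _ = ⨆ k, ∫⁻ x, ρ k x ^ 2 :=
        lintegral_iSup (fun k => (hρmeas k).pow_const 2)
          (fun i j hij x => pow_le_pow_left' (hmono hij x) 2)
    _ ≤ L := iSup_le hkey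


lemma star_lemma {d : ℕ} (μ : ℕ → Measure (Fin d → ℝ)) (μlim : Measure (Fin d → ℝ))
    [∀ n, IsProbabilityMeasure (μ n)] [IsProbabilityMeasure μlim]
    (hconv : ∀ f : (Fin d → ℝ) →ᵇ ℝ, Tendsto (fun n => ∫ x, f x ∂(μ n)) atTop (𝓝 (∫ x, f x ∂μlim)))
    (ρ : ℕ → (Fin d → ℝ) → ℝ≥0∞) (hρmeas : ∀ n, Measurable (ρ n))
    (hdens : ∀ n, μ n = volume.withDensity (ρ n))
    (f : (Fin d → ℝ) → ℝ) (hf : Continuous f) (hfc : HasCompactSupport f) (hf0 : ∀ x, 0 ≤ f x) :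
    2 * ∫⁻ x, ENNReal.ofReal (f x) ∂μlim ≤
      (∫⁻ x, (ENNReal.ofReal (f x)) ^ 2) + atTop.liminf (fun n => ∫⁻ x, (ρ n x) ^ 2) := by
  set F : (Fin d → ℝ) → ℝ≥0∞ := fun x => ENNReal.ofReal (f x) with hFdef
  have hFmeas : Measurable F := ENNReal.measurable_ofReal.comp hf.measurable
  set fb : (Fin d → ℝ) →ᵇ ℝ := ofCompactSupport f hf hfc with hfb
  have hfb_coe : ∀ x, fb x = f x := fun x => rfl
  have hint : ∀ (ν : Measure (Fin d → ℝ)), IsProbabilityMeasure ν →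
      ENNReal.ofReal (∫ x, f x ∂ν) = ∫⁻ x, F x ∂ν := by
    intro ν hν
    have : Integrable f ν := fb.integrable ν
    exact ofReal_integral_eq_lintegral_ofReal this (ae_of_all _ hf0)
  have htend : Tendsto (fun n => ∫⁻ x, F x ∂(μ n)) atTop (𝓝 (∫⁻ x, F x ∂μlim)) := by
    have h1 := ENNReal.tendsto_ofReal (hconv fb)
    simp only [hfb_coe] at h1
    have e1 : (fun n => ENNReal.ofReal (∫ x, f x ∂(μ n))) = fun n => ∫⁻ x, F x ∂(μ n) := by
      funext n; exact hint _ inferInstance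
    rw [e1, hint μlim inferInstance] at h1
    exact h1
  have hstep : ∀ n, 2 * ∫⁻ x, F x ∂(μ n) ≤ (∫⁻ x, F x ^ 2) + ∫⁻ x, (ρ n x) ^ 2 := by
    intro n
    rw [hdens n, lintegral_withDensity_eq_lintegral_mul _ (hρmeas n) hFmeas]
    calc 2 * ∫⁻ x, (ρ n x) * F x = ∫⁻ x, 2 * ((ρ n x) * F x) :=
          (lintegral_const_mul 2 ((hρmeas n).mul hFmeas)).symm
      _ ≤ ∫⁻ x, (F x ^ 2 + (ρ n x) ^ 2) := lintegral_mono fun x => by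
          rw [mul_comm (ρ n x)]; exact two_mul_le_sq_add' _ _
      _ = _ := lintegral_add_left (hFmeas.pow_const 2) _
  have h2 : Tendsto (fun n => 2 * ∫⁻ x, F x ∂(μ n)) atTop (𝓝 (2 * ∫⁻ x, F x ∂μlim)) :=
    ENNReal.Tendsto.const_mul htend (Or.inr (by norm_num))
  rw [← h2.liminf_eq]
  calc atTop.liminf (fun n => 2 * ∫⁻ x, F x ∂(μ n))
      ≤ atTop.liminf (fun n => (∫⁻ x, F x ^ 2) + ∫⁻ x, (ρ n x) ^ 2) :=
        liminf_le_liminf (Eventually.of_forall hstep)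
    _ = _ := by
        apply liminf_const_add
        · exact (Filter.isBounded_le_of_top).isCobounded_flip
        · exact Filter.isBounded_ge_of_bot


lemma ac_lemma {d : ℕ} (μlim : Measure (Fin d → ℝ)) [IsProbabilityMeasure μlim]
    (L : ℝ≥0∞) (hL : L ≠ ⊤)
    (star : ∀ f : (Fin d → ℝ) → ℝ, Continuous f → HasCompactSupport f → (∀ x, 0 ≤ f x) →
      2 * ∫⁻ x, ENNReal.ofReal (f x) ∂μlim ≤ (∫⁻ x, (ENNReal.ofReal (f x)) ^ 2) + L) :
    μlim ≪ volume := by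
  have hcompact : ∀ K : Set (Fin d → ℝ), IsCompact K → volume K = 0 → μlim K = 0 := by
    intro K hKc hK0
    have key : ∀ n : ℕ, 2 * ((((n:ℕ)+1 : ℕ) : ℝ≥0∞) * μlim K) ≤ L := by
      intro n
      apply ENNReal.le_of_forall_pos_le_add
      intro ε hε hLtop
      set M : ℝ := ((n + 1 : ℕ) : ℝ) with hM
      have hM0 : 0 < M := by positivity
      have hMcast : ENNReal.ofReal M = ((n+1 : ℕ) : ℝ≥0∞) := ENNReal.ofReal_natCast _
      set δ : ℝ≥0∞ := (ε : ℝ≥0∞) / (ENNReal.ofReal M ^ 2) with hδ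
      have hMne0 : (ENNReal.ofReal M ^ 2) ≠ 0 := by
        simp [hMcast]
      have hMnetop : (ENNReal.ofReal M ^ 2) ≠ ⊤ := by
        simp [hMcast]
      have hδ0 : 0 < δ := ENNReal.div_pos (by exact_mod_cast hε.ne') hMnetop
      obtain ⟨U, hKU, hUopen, hUvol⟩ := Set.exists_isOpen_lt_of_lt K δ (by rw [hK0]; exact hδ0)
      obtain ⟨f, hf1, hf0, hfc, hfIcc⟩ := exists_continuous_one_zero_of_isCompact hKc
        hUopen.isClosed_compl (Set.disjoint_left.mpr fun x hxK hxU => hxU (hKU hxK))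
      set g : (Fin d → ℝ) → ℝ := fun x => M * f x with hg
      have hgc : Continuous g := continuous_const.mul f.continuous
      have hgsupp : HasCompactSupport g := hfc.mul_left
      have hg0 : ∀ x, 0 ≤ g x := fun x => mul_nonneg hM0.le (hfIcc x).1
      have hstar := star g hgc hgsupp hg0
      have lhs : ENNReal.ofReal M * μlim K ≤ ∫⁻ x, ENNReal.ofReal (g x) ∂μlim := by
        rw [← lintegral_indicator_const hKc.measurableSet (ENNReal.ofReal M)]
        apply lintegral_mono
        intro x
        by_cases hx : x ∈ K
        · rw [Set.indicator_of_mem hx]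
          have : f x = 1 := hf1 hx
          simp [hg, this]
        · rw [Set.indicator_of_notMem hx]; exact zero_le
      have rhs : (∫⁻ x, ENNReal.ofReal (g x) ^ 2) ≤ ENNReal.ofReal M ^ 2 * volume U := by
        rw [← lintegral_indicator_const hUopen.measurableSet (ENNReal.ofReal M ^ 2)]
        apply lintegral_mono
        intro x
        by_cases hx : x ∈ U
        · rw [Set.indicator_of_mem hx]
          have hgle : g x ≤ M := by
            simpa [hg] using mul_le_of_le_one_right hM0.le (hfIcc x).2
          exact pow_le_pow_left' (ENNReal.ofReal_le_ofReal hgle) 2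
        · rw [Set.indicator_of_notMem hx]
          have : f x = 0 := hf0 hx
          simp [hg, this]
      calc 2 * (((n+1 : ℕ) : ℝ≥0∞) * μlim K) = 2 * (ENNReal.ofReal M * μlim K) := by rw [hMcast]
        _ ≤ 2 * ∫⁻ x, ENNReal.ofReal (g x) ∂μlim := by gcongr
        _ ≤ (∫⁻ x, ENNReal.ofReal (g x) ^ 2) + L := hstar
        _ ≤ ENNReal.ofReal M ^ 2 * volume U + L := by gcongr
        _ ≤ ENNReal.ofReal M ^ 2 * δ + L := by gcongr
        _ = ε + L := by rw [hδ, ENNReal.mul_div_cancel hMne0 hMnetop]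
        _ = L + ε := add_comm _ _
    have h3 : ∀ n : ℕ, (n : ℝ≥0∞) * μlim K ≤ L := by
      intro n
      refine le_trans ?_ (key n)
      rw [← mul_assoc]
      gcongr
      calc (n : ℝ≥0∞) ≤ 2 * ((n:ℝ≥0∞) + 1) := by
            calc (n : ℝ≥0∞) ≤ (n:ℝ≥0∞) + 1 := le_self_add
              _ ≤ 2 * ((n:ℝ≥0∞) + 1) := by
                  nth_rewrite 1 [← one_mul ((n:ℝ≥0∞) + 1)]
                  gcongr
                  exact one_le_two
        _ = 2 * (((n+1 : ℕ)) : ℝ≥0∞) := by push_cast; ring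
    by_contra hne
    have h4 : (⊤ : ℝ≥0∞) * μlim K ≤ L := by
      rw [← ENNReal.iSup_natCast, ENNReal.iSup_mul]
      exact iSup_le h3
    rw [ENNReal.top_mul hne] at h4
    exact hL (top_le_iff.mp h4)
  apply Measure.AbsolutelyContinuous.mk
  intro A hA hA0
  refine le_antisymm ?_ zero_le
  apply ENNReal.le_of_forall_pos_le_add
  intro ε hε _
  obtain ⟨K, hKA, hKc, hlt⟩ := hA.exists_isCompact_lt_add (μ := μlim)
    (measure_ne_top _ _) (ε := ε) (by exact_mod_cast hε.ne')
  have hKvol : volume K = 0 := le_antisymm (hA0 ▸ measure_mono hKA) zero_le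
  have := hcompact K hKc hKvol
  rw [this, zero_add] at hlt
  simpa using hlt.le


end StmtAux

/-- Lower semicontinuity of the L² entropy under narrow convergence: if probability
measures `μₙ` with Lebesgue densities `ρₙ` converge narrowly to `μ` and
`liminf ∫ ρₙ² < ∞`, then `μ` has a Lebesgue density `ρ` with
`∫ ρ² ≤ liminf ∫ ρₙ²`. -/
theorem stmt_4 {d : ℕ} (μ : ℕ → Measure (Fin d → ℝ)) (μlim : Measure (Fin d → ℝ))
    [∀ n, IsProbabilityMeasure (μ n)] [IsProbabilityMeasure μlim]
    (hconv : ∀ f : (Fin d → ℝ) →ᵇ ℝ,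
      Tendsto (fun n => ∫ x, f x ∂(μ n)) atTop (𝓝 (∫ x, f x ∂μlim)))
    (ρ : ℕ → (Fin d → ℝ) → ℝ≥0∞) (hρmeas : ∀ n, Measurable (ρ n))
    (hdens : ∀ n, μ n = volume.withDensity (ρ n))
    (hfin : atTop.liminf (fun n => ∫⁻ x, (ρ n x) ^ 2) < ⊤) :
    μlim ≪ volume ∧
      ∫⁻ x, (μlim.rnDeriv volume x) ^ 2 ≤ atTop.liminf (fun n => ∫⁻ x, (ρ n x) ^ 2) := by
  set L := atTop.liminf (fun n => ∫⁻ x, (ρ n x) ^ 2) with hLdef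
  have hLne : L ≠ ⊤ := hfin.ne
  have star := fun f hf hfc hf0 => star_lemma μ μlim hconv ρ hρmeas hdens f hf hfc hf0
  have hac : μlim ≪ volume := ac_lemma μlim L hLne star
  refine ⟨hac, ?_⟩
  have hrn : Measurable (μlim.rnDeriv volume) := Measure.measurable_rnDeriv _ _
  have hwd : volume.withDensity (μlim.rnDeriv volume) = μlim :=
    Measure.withDensity_rnDeriv_eq _ _ hac
  apply bound_lemma _ hrn L hLne
  intro f hf hfc hf0
  have h := star f hf hfc hf0
  rw [← hwd, lintegral_withDensity_eq_lintegral_mul _ hrn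
    hf.measurable.ennreal_ofReal] at h
  simpa using h
end

section
/- Let K ⊆ ℝ^d be compact with Lebesgue measure λ(K) > 0, and let m_K denote the uniform probability measure on K, m_K(A) = λ(A ∩ K)/λ(K). Let ε_n → 0 with ε_n > 0, and let (μ_n) be Borel probability measures on ℝ^d, each absolutely continuous with respect to λ with density ρ_n vanishing almost everywhere outside K, converging narrowly to a Borel probability measure μ. If sup_n (1/ε_n)( ∫ ρ_n² dλ − 1/λ(K) ) < ∞, then μ = m_K. -/
open MeasureTheory Filter Topology

open scoped ENNReal BoundedContinuousFunction

/-- If probability measures `μₙ` with Lebesgue densities `ρₙ` supported (a.e.) in a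
compact set `K` of positive Lebesgue measure converge narrowly to `μ`, `εₙ → 0` with
`εₙ > 0`, and the shifted entropy penalties `(1/εₙ)(∫ ρₙ² − 1/λ(K))` are uniformly
bounded, then `μ` is the uniform probability measure on `K`. -/
theorem stmt_9 {d : ℕ} (K : Set (Fin d → ℝ)) (hKcomp : IsCompact K)
    (hKpos : 0 < volume K)
    (ε : ℕ → ℝ) (hεpos : ∀ n, 0 < ε n) (hε : Tendsto ε atTop (𝓝 0))
    (μ : ℕ → Measure (Fin d → ℝ)) (μlim : Measure (Fin d → ℝ))
    [∀ n, IsProbabilityMeasure (μ n)] [IsProbabilityMeasure μlim]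
    (ρ : ℕ → (Fin d → ℝ) → ℝ≥0∞) (hρmeas : ∀ n, Measurable (ρ n))
    (hdens : ∀ n, μ n = volume.withDensity (ρ n))
    (hρsupp : ∀ n, ∀ᵐ x ∂volume, x ∉ K → ρ n x = 0)
    (hconv : ∀ f : (Fin d → ℝ) →ᵇ ℝ,
      Tendsto (fun n => ∫ x, f x ∂(μ n)) atTop (𝓝 (∫ x, f x ∂μlim)))
    (hbdd : (⨆ n, (ENNReal.ofReal (ε n))⁻¹ * ((∫⁻ x, (ρ n x) ^ 2) - (volume K)⁻¹)) < ⊤) :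
    μlim = (volume K)⁻¹ • volume.restrict K := by
  classical
  have hK : MeasurableSet K := hKcomp.measurableSet
  have hvKfin : volume K ≠ ⊤ := hKcomp.measure_lt_top.ne
  set c : ℝ≥0∞ := (volume K)⁻¹ with hc
  have hc_ne_top : c ≠ ⊤ := by simp [hc, hKpos.ne']
  have hc_ne_zero : c ≠ 0 := by simp [hc, hvKfin]
  set ν : Measure (Fin d → ℝ) := c • volume.restrict K with hν
  haveI hrKfin : IsFiniteMeasure (volume.restrict K) :=
    ⟨by simpa [Measure.restrict_apply] using hKcomp.measure_lt_top⟩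
  haveI hν_fin : IsFiniteMeasure ν := by
    constructor
    rw [hν]
    simp only [Measure.smul_apply, Measure.restrict_apply MeasurableSet.univ, Set.univ_inter,
      smul_eq_mul]
    exact ENNReal.mul_lt_top hc_ne_top.lt_top hKcomp.measure_lt_top
  -- basic facts about the densities
  have hρ1 : ∀ n, ∫⁻ x, ρ n x = 1 := by
    intro n
    have h1 : (volume.withDensity (ρ n)) Set.univ = 1 := by
      rw [← hdens n]; exact measure_univ
    rwa [withDensity_apply _ MeasurableSet.univ, setLIntegral_univ] at h1
  have hρfin : ∀ n, ∀ᵐ x ∂(volume : Measure (Fin d → ℝ)), ρ n x < ⊤ := fun n =>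
    ae_lt_top (hρmeas n) (by rw [hρ1 n]; exact ENNReal.one_ne_top)
  set C : ℝ≥0∞ := ⨆ n, (ENNReal.ofReal (ε n))⁻¹ * ((∫⁻ x, (ρ n x) ^ 2) - c) with hCdef
  have hCfin : C ≠ ⊤ := hbdd.ne
  have hCle : ∀ n, (ENNReal.ofReal (ε n))⁻¹ * ((∫⁻ x, (ρ n x) ^ 2) - c) ≤ C := fun n =>
    le_iSup (fun n => (ENNReal.ofReal (ε n))⁻¹ * ((∫⁻ x, (ρ n x) ^ 2) - c)) n
  have hSsub : ∀ n, (∫⁻ x, (ρ n x) ^ 2) - c ≤ ENNReal.ofReal (ε n) * C := by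
    intro n
    have hε0 : ENNReal.ofReal (ε n) ≠ 0 := by
      simp [ENNReal.ofReal_eq_zero, not_le, hεpos n]
    have hεtop : ENNReal.ofReal (ε n) ≠ ⊤ := ENNReal.ofReal_ne_top
    calc (∫⁻ x, (ρ n x) ^ 2) - c
        = ENNReal.ofReal (ε n) * ((ENNReal.ofReal (ε n))⁻¹ * ((∫⁻ x, (ρ n x) ^ 2) - c)) := by
          rw [← mul_assoc, ENNReal.mul_inv_cancel hε0 hεtop, one_mul]
      _ ≤ ENNReal.ofReal (ε n) * C := mul_le_mul_right (hCle n) _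
  have hSfin : ∀ n, (∫⁻ x, (ρ n x) ^ 2) ≠ ⊤ := by
    intro n
    have h1 : (∫⁻ x, (ρ n x) ^ 2) ≤ ((∫⁻ x, (ρ n x) ^ 2) - c) + c := le_tsub_add
    have h2 : ((∫⁻ x, (ρ n x) ^ 2) - c) + c ≤ ENNReal.ofReal (ε n) * C + c :=
      add_le_add_left (hSsub n) c
    exact ((h1.trans h2).trans_lt
      (ENNReal.add_lt_top.2 ⟨ENNReal.mul_lt_top ENNReal.ofReal_lt_top hCfin.lt_top,
        hc_ne_top.lt_top⟩)).ne
  -- real-valued densities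
  set g : ℕ → (Fin d → ℝ) → ℝ := fun n x => (ρ n x).toReal with hgdef
  set h : (Fin d → ℝ) → ℝ := K.indicator fun _ => c.toReal with hhdef
  have hgmeas : ∀ n, Measurable (g n) := fun n => (hρmeas n).ennreal_toReal
  have hhmeas : Measurable h := measurable_const.indicator hK
  have hgi : ∀ n, Integrable (g n) := fun n =>
    integrable_toReal_of_lintegral_ne_top (hρmeas n).aemeasurable (by rw [hρ1 n]; exact ENNReal.one_ne_top)
  have hg2eq : ∀ n, (fun x => g n x ^ 2) = fun x => ((ρ n x) ^ 2).toReal := by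
    intro n; funext x; rw [ENNReal.toReal_pow]
  have hg2i : ∀ n, Integrable (fun x => g n x ^ 2) := by
    intro n
    rw [hg2eq n]
    exact integrable_toReal_of_lintegral_ne_top ((hρmeas n).pow_const 2).aemeasurable (hSfin n)
  have hhi : Integrable h := by
    rw [hhdef, integrable_indicator_iff hK]
    exact integrableOn_const hKcomp.measure_lt_top.ne
  have hh2eq : (fun x => h x ^ 2) = K.indicator fun _ => c.toReal ^ 2 := by
    funext x
    by_cases hx : x ∈ K <;>
      simp [hhdef, Set.indicator_of_mem, Set.indicator_of_notMem, hx]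
  have hh2i : Integrable (fun x => h x ^ 2) := by
    rw [hh2eq, integrable_indicator_iff hK]
    exact integrableOn_const hKcomp.measure_lt_top.ne
  have hghae : ∀ n, (fun x => g n x * h x) =ᵐ[volume] fun x => c.toReal * g n x := by
    intro n
    filter_upwards [hρsupp n] with x hx
    by_cases hxK : x ∈ K
    · simp only [hhdef, Set.indicator_of_mem hxK]; ring
    · simp [hhdef, Set.indicator_of_notMem hxK, hgdef, hx hxK]
  have hghi : ∀ n, Integrable (fun x => g n x * h x) := fun n =>
    (Integrable.congr ((hgi n).const_mul c.toReal) (hghae n).symm)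
  -- values of the integrals
  have hgint : ∀ n, ∫ x, g n x = 1 := by
    intro n
    rw [hgdef]
    rw [integral_toReal (hρmeas n).aemeasurable (hρfin n), hρ1 n, ENNReal.toReal_one]
  have hg2int : ∀ n, ∫ x, g n x ^ 2 = (∫⁻ x, (ρ n x) ^ 2).toReal := by
    intro n
    rw [hg2eq n]
    exact integral_toReal ((hρmeas n).pow_const 2).aemeasurable
      (ae_lt_top ((hρmeas n).pow_const 2) (hSfin n))
  have hghint : ∀ n, ∫ x, g n x * h x = c.toReal := by
    intro n
    rw [integral_congr_ae (hghae n), integral_const_mul, hgint n, mul_one]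
  have hcvK : c.toReal * (volume K).toReal = 1 := by
    rw [hc, ENNReal.toReal_inv]
    exact inv_mul_cancel₀ (ENNReal.toReal_pos hKpos.ne' hvKfin).ne'
  have hh2int : ∫ x, h x ^ 2 = c.toReal := by
    rw [hh2eq, integral_indicator_const _ hK, smul_eq_mul, measureReal_def]
    linear_combination c.toReal * hcvK
  have hvint : ∀ n, ∫ x, (g n x - h x) ^ 2 = (∫⁻ x, (ρ n x) ^ 2).toReal - c.toReal := by
    intro n
    have e : ∫ x, (g n x - h x) ^ 2
        = ∫ x, (g n x ^ 2 - 2 * (g n x * h x) + h x ^ 2) :=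
      integral_congr_ae (Eventually.of_forall fun x => by ring)
    have i1 : Integrable (fun x => g n x ^ 2 - 2 * (g n x * h x)) volume :=
      (hg2i n).sub ((hghi n).const_mul 2)
    rw [e, integral_add i1 hh2i, integral_sub (hg2i n) ((hghi n).const_mul 2),
      integral_const_mul, hg2int n, hghint n, hh2int]
    ring
  have hvle : ∀ n, ∫ x, (g n x - h x) ^ 2 ≤ ε n * C.toReal := by
    intro n
    rw [hvint n]
    have hsubfin : (∫⁻ x, (ρ n x) ^ 2) - c ≠ ⊤ :=
      ((hSsub n).trans_lt (ENNReal.mul_lt_top ENNReal.ofReal_lt_top hCfin.lt_top)).ne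
    have h1 : (∫⁻ x, (ρ n x) ^ 2).toReal ≤ (((∫⁻ x, (ρ n x) ^ 2) - c) + c).toReal :=
      ENNReal.toReal_mono (ENNReal.add_ne_top.2 ⟨hsubfin, hc_ne_top⟩) le_tsub_add
    rw [ENNReal.toReal_add hsubfin hc_ne_top] at h1
    have h2 : ((∫⁻ x, (ρ n x) ^ 2) - c).toReal ≤ (ENNReal.ofReal (ε n) * C).toReal :=
      ENNReal.toReal_mono (ENNReal.mul_ne_top ENNReal.ofReal_ne_top hCfin) (hSsub n)
    rw [ENNReal.toReal_mul, ENNReal.toReal_ofReal (hεpos n).le] at h2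
    linarith
  -- narrow convergence of μ n to ν
  have key : ∀ G : (Fin d → ℝ) →ᵇ ℝ,
      Tendsto (fun n => ∫ x, G x ∂(μ n)) atTop (𝓝 (∫ x, G x ∂ν)) := by
    intro G
    have e1 : ∀ n, ∫ x, G x ∂(μ n) = ∫ x, G x * g n x := by
      intro n
      rw [hdens n,
        withDensity_congr_ae (f := ρ n) (g := fun x => ((ρ n x).toNNReal : ℝ≥0∞))
          (by filter_upwards [hρfin n] with x hx; simp [ENNReal.coe_toNNReal hx.ne]),
        integral_withDensity_eq_integral_smul (hρmeas n).ennreal_toNNReal G]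
      refine integral_congr_ae (Eventually.of_forall fun x => ?_)
      simp [NNReal.smul_def, hgdef, ENNReal.toReal, mul_comm]
    have e2 : ∫ x, G x ∂ν = ∫ x, G x * h x := by
      have e3 : (fun x => G x * h x) = K.indicator fun x => c.toReal * G x := by
        funext x
        by_cases hx : x ∈ K <;>
          simp [hhdef, Set.indicator_of_mem, Set.indicator_of_notMem, hx, mul_comm]
      rw [hν, integral_smul_measure, e3, integral_indicator hK, integral_const_mul,
        smul_eq_mul]
    -- square-integrability
    have huL2 : MemLp (K.indicator ⇑G) (ENNReal.ofReal 2) volume := by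
      rw [show ENNReal.ofReal 2 = 2 by norm_num, memLp_indicator_iff_restrict hK]
      exact MemLp.of_bound G.continuous.aestronglyMeasurable ‖G‖
        (Eventually.of_forall G.norm_coe_le_norm)
    have hvL2 : ∀ n, MemLp (fun x => g n x - h x) (ENNReal.ofReal 2) volume := by
      intro n
      rw [show ENNReal.ofReal 2 = 2 by norm_num]
      refine (memLp_two_iff_integrable_sq
        ((hgmeas n).sub hhmeas).aestronglyMeasurable).2 ?_
      have i1 : Integrable (fun x => g n x ^ 2 - 2 * (g n x * h x)) volume :=
        (hg2i n).sub ((hghi n).const_mul 2)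
      have i2 : Integrable (fun x => g n x ^ 2 - 2 * (g n x * h x) + h x ^ 2) volume :=
        i1.add hh2i
      exact i2.congr (Eventually.of_forall fun x => by simp only [Pi.sub_apply]; ring)
    set M : ℝ := (∫ x, ‖K.indicator (⇑G) x‖ ^ (2 : ℝ)) ^ (1 / 2 : ℝ) with hM
    have hM0 : 0 ≤ M :=
      Real.rpow_nonneg (integral_nonneg fun x => Real.rpow_nonneg (norm_nonneg _) _) _
    have hnorm_sq : ∀ y : ℝ, ‖y‖ ^ (2 : ℝ) = y ^ 2 := by
      intro y
      rw [show (2 : ℝ) = ((2 : ℕ) : ℝ) by norm_num, Real.rpow_natCast]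
      simp [sq_abs]
    have hbound : ∀ n, ‖∫ x, G x ∂(μ n) - ∫ x, G x ∂ν‖ ≤ M * Real.sqrt (ε n * C.toReal) := by
      intro n
      have hdiff : ∫ x, G x ∂(μ n) - ∫ x, G x ∂ν
          = ∫ x, K.indicator (⇑G) x * (g n x - h x) := by
        rw [e1 n, e2, ← integral_sub ((hgi n).bdd_mul G.continuous.aestronglyMeasurable
          (Eventually.of_forall G.norm_coe_le_norm)) (hhi.bdd_mul G.continuous.aestronglyMeasurable
          (Eventually.of_forall G.norm_coe_le_norm))]
        refine integral_congr_ae ?_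
        filter_upwards [hρsupp n] with x hx
        by_cases hxK : x ∈ K
        · simp only [Set.indicator_of_mem hxK]; ring
        · simp [Set.indicator_of_notMem hxK, hhdef, hgdef, hx hxK]
      rw [hdiff]
      calc ‖∫ x, K.indicator (⇑G) x * (g n x - h x)‖
          ≤ ∫ x, ‖K.indicator (⇑G) x‖ * ‖g n x - h x‖ := by
            refine (norm_integral_le_integral_norm _).trans_eq ?_
            exact integral_congr_ae (Eventually.of_forall fun x => norm_mul _ _)
        _ ≤ (∫ x, ‖K.indicator (⇑G) x‖ ^ (2 : ℝ)) ^ (1 / 2 : ℝ)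
              * (∫ x, ‖g n x - h x‖ ^ (2 : ℝ)) ^ (1 / 2 : ℝ) :=
            MeasureTheory.integral_mul_norm_le_Lp_mul_Lq Real.HolderConjugate.two_two huL2 (hvL2 n)
        _ ≤ M * Real.sqrt (ε n * C.toReal) := by
            rw [← hM]
            refine mul_le_mul_of_nonneg_left ?_ hM0
            have hv2 : ∫ x, ‖g n x - h x‖ ^ (2 : ℝ) = ∫ x, (g n x - h x) ^ 2 :=
              integral_congr_ae (Eventually.of_forall fun x => hnorm_sq _)
            rw [hv2, Real.sqrt_eq_rpow]
            refine Real.rpow_le_rpow (integral_nonneg fun x => sq_nonneg _) (hvle n) (by norm_num)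
    have htend : Tendsto (fun n => M * Real.sqrt (ε n * C.toReal)) atTop (𝓝 0) := by
      have h1 : Tendsto (fun n => ε n * C.toReal) atTop (𝓝 0) := by
        simpa using hε.mul_const C.toReal
      have h2 : Tendsto (fun n => Real.sqrt (ε n * C.toReal)) atTop (𝓝 0) := by
        have h2' := (Real.continuous_sqrt.tendsto 0).comp h1
        rwa [Real.sqrt_zero] at h2'
      have h3 := h2.const_mul M
      rwa [mul_zero] at h3
    rw [← tendsto_sub_nhds_zero_iff]
    exact squeeze_zero_norm hbound htend
  have heq : ∀ G : (Fin d → ℝ) →ᵇ ℝ, ∫ x, G x ∂μlim = ∫ x, G x ∂ν := fun G =>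
    tendsto_nhds_unique (hconv G) (key G)
  -- conclude by extensionality
  refine MeasureTheory.ext_of_forall_lintegral_eq_of_IsFiniteMeasure fun F => ?_
  have h1 := F.lintegral_lt_top_of_nnreal (μ := μlim)
  have h2 := F.lintegral_lt_top_of_nnreal (μ := ν)
  refine (ENNReal.toReal_eq_toReal_iff' h1.ne h2.ne).1 ?_
  rw [BoundedContinuousFunction.toReal_lintegral_coe_eq_integral,
    BoundedContinuousFunction.toReal_lintegral_coe_eq_integral]
  exact heq (BoundedContinuousFunction.comp _
    (isometry_subtype_coe.lipschitz : LipschitzWith 1 ((↑) : NNReal → ℝ)) F)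
end

section
/- Let f_0, f_1, …, f_m : ℝ^d → ℝ^d be continuously differentiable vector fields with linear growth: there is C > 0 with ‖f_i(x)‖ ≤ C(1 + ‖x‖) for all x and all i. Let U ⊆ ℝ^m be nonempty, compact, and convex, and T > 0. Suppose u_n ∈ L²([0,T]; ℝ^m) with u_n(t) ∈ U a.e. converge weakly in L² to u, and x_{n,0} → x_0 in ℝ^d. Let x_n : [0,T] → ℝ^d be absolutely continuous curves with x_n(0) = x_{n,0} and x_n'(t) = f_0(x_n(t)) + Σ_{i=1}^m (u_n)_i(t) f_i(x_n(t)) for a.e. t, and let x : [0,T] → ℝ^d be absolutely continuous with x(0) = x_0 and x'(t) = f_0(x(t)) + Σ_{i=1}^m u_i(t) f_i(x(t)) for a.e. t. Then x_n(T) → x(T). -/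
open MeasureTheory Filter Topology

lemma coord_abs_le_norm {d : ℕ} (v : EuclideanSpace ℝ (Fin d)) (j : Fin d) : |v j| ≤ ‖v‖ := by
  rw [EuclideanSpace.norm_eq]
  have h1 : |v j| = Real.sqrt (‖v j‖ ^ 2) := by
    rw [Real.sqrt_sq_eq_abs]; simp [Real.norm_eq_abs, abs_abs]
  rw [h1]
  apply Real.sqrt_le_sqrt
  exact Finset.single_le_sum (f := fun i => ‖v i‖ ^ 2) (fun i _ => sq_nonneg _) (Finset.mem_univ j)

lemma lipschitz_on_ball {d : ℕ} {f : EuclideanSpace ℝ (Fin d) → EuclideanSpace ℝ (Fin d)}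
    (hf : ContDiff ℝ 1 f) (R : ℝ) :
    ∃ K : ℝ, 0 ≤ K ∧ ∀ x y : EuclideanSpace ℝ (Fin d),
      ‖x‖ ≤ R → ‖y‖ ≤ R → ‖f x - f y‖ ≤ K * ‖x - y‖ := by
  have hcont : ContinuousOn (fun x => fderiv ℝ f x) (Metric.closedBall 0 R) :=
    (hf.continuous_fderiv one_ne_zero).continuousOn
  obtain ⟨C, hC⟩ :=
    (isCompact_closedBall (0 : EuclideanSpace ℝ (Fin d)) R).exists_bound_of_continuousOn hcont
  refine ⟨max C 0, le_max_right _ _, fun x y hx hy => ?_⟩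
  have h2 := Convex.norm_image_sub_le_of_norm_fderiv_le (C := max C 0)
    (fun z _ => (hf.differentiable one_ne_zero).differentiableAt)
    (fun z hz => le_trans (hC z hz) (le_max_left _ _))
    (convex_closedBall 0 R) (mem_closedBall_zero_iff.2 hy) (mem_closedBall_zero_iff.2 hx)
  simpa [norm_sub_rev] using h2

lemma gronwall_integral {φ : ℝ → ℝ} {a K T : ℝ} (hK : 0 ≤ K) (hT : 0 ≤ T)
    (hφ : ContinuousOn φ (Set.Icc 0 T))
    (hφ0 : ∀ t ∈ Set.Icc (0:ℝ) T, 0 ≤ φ t)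
    (h : ∀ t ∈ Set.Icc (0:ℝ) T, φ t ≤ a + K * ∫ s in Set.Ioc (0:ℝ) t, φ s) :
    ∀ t ∈ Set.Icc (0:ℝ) T, φ t ≤ a * Real.exp (K * t) := by
  have hint : IntegrableOn φ (Set.Icc 0 T) := hφ.integrableOn_compact isCompact_Icc
  have ha : 0 ≤ a := by
    have h0 := h 0 ⟨le_rfl, hT⟩
    simp only [Set.Ioc_self, Measure.restrict_empty, integral_zero_measure, mul_zero,
      add_zero] at h0
    linarith [hφ0 0 ⟨le_rfl, hT⟩]
  set ψ : ℝ → ℝ := fun t => a + K * ∫ s in Set.Ioc (0:ℝ) t, φ s with hψdef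
  have hψcont : ContinuousOn ψ (Set.Icc 0 T) :=
    (continuousOn_const.add ((intervalIntegral.continuousOn_primitive hint).const_smul K))
  have hψnonneg : ∀ t ∈ Set.Icc (0:ℝ) T, 0 ≤ ψ t := by
    intro t ht
    have : 0 ≤ ∫ s in Set.Ioc (0:ℝ) t, φ s :=
      setIntegral_nonneg measurableSet_Ioc fun s hs => hφ0 s ⟨le_of_lt hs.1, hs.2.trans ht.2⟩
    positivity
  have hφψ : ∀ t ∈ Set.Icc (0:ℝ) T, φ t ≤ ψ t := h
  have hderiv : ∀ t ∈ Set.Ico (0:ℝ) T, HasDerivWithinAt ψ (K * φ t) (Set.Ici t) t := by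
    intro t ht
    have hIcc : Set.Icc (0:ℝ) T ∈ 𝓝[Set.Ici t] t := by
      refine mem_nhdsWithin.2 ⟨Set.Iio T, isOpen_Iio, ht.2, ?_⟩
      rintro s ⟨hs1, hs2⟩
      exact ⟨le_trans ht.1 hs2, le_of_lt hs1⟩
    have hii : IntervalIntegrable φ volume 0 t := by
      refine (hint.mono_set ?_).intervalIntegrable
      rw [Set.uIcc_of_le ht.1]
      exact Set.Icc_subset_Icc le_rfl ht.2.le
    have hIcc' : Set.Icc (0:ℝ) T ∈ 𝓝[Set.Ioi t] t :=
      nhdsWithin_mono t Set.Ioi_subset_Ici_self hIcc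
    have hmeas : StronglyMeasurableAtFilter φ (𝓝[Set.Ioi t] t) volume :=
      ⟨Set.Icc 0 T, hIcc', hφ.aestronglyMeasurable measurableSet_Icc⟩
    have hcw : ContinuousWithinAt φ (Set.Ioi t) t :=
      (hφ t ⟨ht.1, ht.2.le⟩).mono_of_mem_nhdsWithin hIcc'
    have hD : HasDerivWithinAt (fun u => ∫ s in (0:ℝ)..u, φ s) (φ t) (Set.Ici t) t :=
      intervalIntegral.integral_hasDerivWithinAt_right hii hmeas hcw
    have hD2 : HasDerivWithinAt (fun u => ∫ s in Set.Ioc (0:ℝ) u, φ s) (φ t) (Set.Ici t) t := by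
      refine hD.congr (fun y hy => ?_) ?_
      · rw [intervalIntegral.integral_of_le (le_trans ht.1 hy)]
      · rw [intervalIntegral.integral_of_le ht.1]
    simpa [hψdef] using (hD2.const_mul K).const_add a
  have key := norm_le_gronwallBound_of_norm_deriv_right_le (K := K) (ε := 0) hψcont hderiv
    (by simp [hψdef, Real.norm_of_nonneg ha] : ‖ψ 0‖ ≤ a)
    (fun t ht => by
      rw [Real.norm_of_nonneg (hψnonneg t ⟨ht.1, ht.2.le⟩),
        Real.norm_of_nonneg (mul_nonneg hK (hφ0 t ⟨ht.1, ht.2.le⟩))]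
      have := hφψ t ⟨ht.1, ht.2.le⟩
      nlinarith)
  intro t ht
  have := key t ht
  rw [Real.norm_of_nonneg (hψnonneg t ht), gronwallBound_ε0] at this
  calc φ t ≤ ψ t := hφψ t ht
    _ ≤ a * Real.exp (K * (t - 0)) := this
    _ = a * Real.exp (K * t) := by ring_nf

set_option maxHeartbeats 2000000 in
/-- Sequential continuity of the endpoint map of a control-affine system with respect
to convergence of initial conditions and weak L² convergence of admissible controls:
if `uₙ ⇀ u` weakly in `L²([0,T];ℝ^m)` with values in a compact convex set `U` a.e.,
`x_{n,0} → x₀`, and `xₙ`, `x` are the corresponding absolutely continuous trajectories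
(encoded by their integral equations), then `xₙ(T) → x(T)`. -/
theorem stmt_13 {d m : ℕ}
    (f₀ : EuclideanSpace ℝ (Fin d) → EuclideanSpace ℝ (Fin d))
    (f : Fin m → EuclideanSpace ℝ (Fin d) → EuclideanSpace ℝ (Fin d))
    (hf₀ : ContDiff ℝ 1 f₀) (hf : ∀ i, ContDiff ℝ 1 (f i))
    (C : ℝ) (hC : 0 < C)
    (hgrow₀ : ∀ x, ‖f₀ x‖ ≤ C * (1 + ‖x‖))
    (hgrow : ∀ i x, ‖f i x‖ ≤ C * (1 + ‖x‖))
    (U : Set (Fin m → ℝ)) (hUne : U.Nonempty) (hUcomp : IsCompact U)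
    (hUconv : Convex ℝ U)
    (T : ℝ) (hT : 0 < T)
    (u : ℕ → ℝ → Fin m → ℝ) (ulim : ℝ → Fin m → ℝ)
    (humeas : ∀ n, Measurable (u n)) (hulim_meas : Measurable ulim)
    (huU : ∀ n, ∀ᵐ t ∂(volume.restrict (Set.Icc (0:ℝ) T)), u n t ∈ U)
    (hulimU : ∀ᵐ t ∂(volume.restrict (Set.Icc (0:ℝ) T)), ulim t ∈ U)
    (hweak : ∀ v : ℝ → Fin m → ℝ, MemLp v 2 (volume.restrict (Set.Icc (0:ℝ) T)) →
      Tendsto (fun n => ∫ t in Set.Icc (0:ℝ) T, ∑ i, v t i * u n t i) atTop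
        (𝓝 (∫ t in Set.Icc (0:ℝ) T, ∑ i, v t i * ulim t i)))
    (x₀ : ℕ → EuclideanSpace ℝ (Fin d)) (xlim₀ : EuclideanSpace ℝ (Fin d))
    (hx₀ : Tendsto x₀ atTop (𝓝 xlim₀))
    (x : ℕ → ℝ → EuclideanSpace ℝ (Fin d)) (xlim : ℝ → EuclideanSpace ℝ (Fin d))
    (hxcont : ∀ n, ContinuousOn (x n) (Set.Icc (0:ℝ) T))
    (hxlimcont : ContinuousOn xlim (Set.Icc (0:ℝ) T))
    (hxinit : ∀ n, x n 0 = x₀ n) (hxliminit : xlim 0 = xlim₀)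
    (hxode : ∀ n, ∀ t ∈ Set.Icc (0:ℝ) T,
      x n t = x₀ n + ∫ s in Set.Ioc (0:ℝ) t, (f₀ (x n s) + ∑ i, u n s i • f i (x n s)))
    (hxlimode : ∀ t ∈ Set.Icc (0:ℝ) T,
      xlim t = xlim₀ + ∫ s in Set.Ioc (0:ℝ) t,
        (f₀ (xlim s) + ∑ i, ulim s i • f i (xlim s))) :
    Tendsto (fun n => x n T) atTop (𝓝 (xlim T)) := by
  classical
  haveI hfin : IsFiniteMeasure (volume.restrict (Set.Icc (0:ℝ) T)) :=
    ⟨by rw [Measure.restrict_apply_univ]; exact measure_Icc_lt_top⟩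
  haveI hfin' : IsFiniteMeasure (volume.restrict (Set.Ioc (0:ℝ) T)) :=
    ⟨by rw [Measure.restrict_apply_univ]; exact measure_Ioc_lt_top⟩
  -- bound on U
  obtain ⟨M₀, hM₀⟩ := isBounded_iff_forall_norm_le.1 hUcomp.isBounded
  set M : ℝ := max M₀ 0 with hMdef
  have hM0 : 0 ≤ M := le_max_right _ _
  have hM : ∀ v ∈ U, ‖v‖ ≤ M := fun v hv => (hM₀ v hv).trans (le_max_left _ _)
  have huM : ∀ n, ∀ᵐ s ∂(volume.restrict (Set.Icc (0:ℝ) T)), ∀ i, |u n s i| ≤ M := by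
    intro n
    filter_upwards [huU n] with s hs i
    calc |u n s i| = ‖u n s i‖ := (Real.norm_eq_abs _).symm
      _ ≤ ‖u n s‖ := norm_le_pi_norm _ i
      _ ≤ M := hM _ hs
  have hulM : ∀ᵐ s ∂(volume.restrict (Set.Icc (0:ℝ) T)), ∀ i, |ulim s i| ≤ M := by
    filter_upwards [hulimU] with s hs i
    calc |ulim s i| = ‖ulim s i‖ := (Real.norm_eq_abs _).symm
      _ ≤ ‖ulim s‖ := norm_le_pi_norm _ i
      _ ≤ M := hM _ hs
  -- bound on initial conditions
  obtain ⟨A₀, hA₀⟩ := (hx₀.norm).bddAbove_range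
  set A : ℝ := max A₀ ‖xlim₀‖ with hAdef
  have hA : ∀ n, ‖x₀ n‖ ≤ A := fun n => le_trans (hA₀ ⟨n, rfl⟩) (le_max_left _ _)
  have hAl : ‖xlim₀‖ ≤ A := le_max_right _ _
  have hA0 : 0 ≤ A := le_trans (norm_nonneg _) hAl
  set K₁ : ℝ := C * (1 + m * M) with hK₁def
  have hK₁0 : 0 ≤ K₁ := by positivity
  set R : ℝ := (A + K₁ * T) * Real.exp (K₁ * T) with hRdef
  have hR0 : 0 ≤ R := by positivity
  -- pointwise bound on the vector field
  have hF_bound : ∀ (c : Fin m → ℝ) (p : EuclideanSpace ℝ (Fin d)), (∀ i, |c i| ≤ M) →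
      ‖f₀ p + ∑ i, c i • f i p‖ ≤ K₁ * (1 + ‖p‖) := by
    intro c p hc
    have h1 : ‖∑ i, c i • f i p‖ ≤ ∑ _i : Fin m, M * (C * (1 + ‖p‖)) := by
      refine (norm_sum_le _ _).trans (Finset.sum_le_sum fun i _ => ?_)
      rw [norm_smul, Real.norm_eq_abs]
      exact mul_le_mul (hc i) (hgrow i p) (norm_nonneg _) hM0
    have h2 : (∑ _i : Fin m, M * (C * (1 + ‖p‖))) = m * (M * (C * (1 + ‖p‖))) := by
      rw [Finset.sum_const, Finset.card_univ, Fintype.card_fin, nsmul_eq_mul]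
    calc ‖f₀ p + ∑ i, c i • f i p‖ ≤ ‖f₀ p‖ + ‖∑ i, c i • f i p‖ := norm_add_le _ _
      _ ≤ C * (1 + ‖p‖) + m * (M * (C * (1 + ‖p‖))) :=
          add_le_add (hgrow₀ p) (h1.trans_eq h2)
      _ = K₁ * (1 + ‖p‖) := by rw [hK₁def]; ring
  -- measurability of the vector field along a trajectory
  have hF_aesm : ∀ (w : ℝ → Fin m → ℝ) (ξ : ℝ → EuclideanSpace ℝ (Fin d)), Measurable w →
      ContinuousOn ξ (Set.Icc (0:ℝ) T) →
      AEStronglyMeasurable (fun s => f₀ (ξ s) + ∑ i, w s i • f i (ξ s))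
        (volume.restrict (Set.Icc (0:ℝ) T)) := by
    intro w ξ hw hξ
    have hξm : AEStronglyMeasurable ξ (volume.restrict (Set.Icc (0:ℝ) T)) :=
      hξ.aestronglyMeasurable measurableSet_Icc
    refine AEStronglyMeasurable.add ((hf₀.continuous).comp_aestronglyMeasurable hξm) ?_
    refine Finset.aestronglyMeasurable_fun_sum _ (fun i _ => ?_)
    exact (((measurable_pi_apply i).comp hw).aestronglyMeasurable).smul
      (((hf i).continuous).comp_aestronglyMeasurable hξm)
  -- integrability of the vector field along a trajectory
  have hF_int : ∀ (w : ℝ → Fin m → ℝ) (ξ : ℝ → EuclideanSpace ℝ (Fin d)), Measurable w →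
      (∀ᵐ s ∂(volume.restrict (Set.Icc (0:ℝ) T)), ∀ i, |w s i| ≤ M) →
      ContinuousOn ξ (Set.Icc (0:ℝ) T) →
      IntegrableOn (fun s => f₀ (ξ s) + ∑ i, w s i • f i (ξ s)) (Set.Icc (0:ℝ) T) := by
    intro w ξ hw hwM hξ
    obtain ⟨Rξ, hRξ⟩ := (isCompact_Icc (a := (0:ℝ)) (b := T)).exists_bound_of_continuousOn hξ
    refine Integrable.mono' (integrable_const (K₁ * (1 + max Rξ 0))) (hF_aesm w ξ hw hξ) ?_
    filter_upwards [hwM, ae_restrict_mem measurableSet_Icc] with s hsM hsI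
    refine (hF_bound _ _ hsM).trans ?_
    have h1 := hRξ s hsI
    have h2 : ‖ξ s‖ ≤ max Rξ 0 := h1.trans (le_max_left _ _)
    nlinarith
  -- a priori bound on trajectories
  have traj_bound : ∀ (w : ℝ → Fin m → ℝ) (ξ : ℝ → EuclideanSpace ℝ (Fin d))
      (ξ₀ : EuclideanSpace ℝ (Fin d)), Measurable w →
      (∀ᵐ s ∂(volume.restrict (Set.Icc (0:ℝ) T)), ∀ i, |w s i| ≤ M) →
      ContinuousOn ξ (Set.Icc (0:ℝ) T) → ‖ξ₀‖ ≤ A →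
      (∀ t ∈ Set.Icc (0:ℝ) T,
        ξ t = ξ₀ + ∫ s in Set.Ioc (0:ℝ) t, (f₀ (ξ s) + ∑ i, w s i • f i (ξ s))) →
      ∀ t ∈ Set.Icc (0:ℝ) T, ‖ξ t‖ ≤ R := by
    intro w ξ ξ₀ hw hwM hξ hξ₀ hode
    have hFint := hF_int w ξ hw hwM hξ
    have key := gronwall_integral (φ := fun t => ‖ξ t‖) (a := A + K₁ * T) (K := K₁) hK₁0 hT.le
      (continuous_norm.comp_continuousOn hξ) (fun t _ => norm_nonneg _) ?_
    · intro t ht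
      refine (key t ht).trans ?_
      rw [hRdef]
      have h1 : Real.exp (K₁ * t) ≤ Real.exp (K₁ * T) :=
        Real.exp_le_exp.2 (mul_le_mul_of_nonneg_left ht.2 hK₁0)
      have h2 : 0 ≤ A + K₁ * T := by positivity
      exact mul_le_mul_of_nonneg_left h1 h2
    · intro t ht
      have hsub : Set.Ioc (0:ℝ) t ⊆ Set.Icc (0:ℝ) T := fun s hs => ⟨hs.1.le, hs.2.trans ht.2⟩
      have hnint : IntegrableOn (fun s => ‖ξ s‖) (Set.Ioc 0 t) :=
        ((continuous_norm.comp_continuousOn hξ).integrableOn_compact isCompact_Icc).mono_set hsub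
      have h1int : IntegrableOn (fun _ : ℝ => (1:ℝ)) (Set.Ioc (0:ℝ) t) :=
        integrableOn_const measure_Ioc_lt_top.ne
      have hgint : IntegrableOn (fun s => K₁ * (1 + ‖ξ s‖)) (Set.Ioc (0:ℝ) t) :=
        (h1int.add hnint).const_mul K₁
      have hmono : ∫ s in Set.Ioc (0:ℝ) t, ‖f₀ (ξ s) + ∑ i, w s i • f i (ξ s)‖
          ≤ ∫ s in Set.Ioc (0:ℝ) t, K₁ * (1 + ‖ξ s‖) := by
        refine integral_mono_of_nonneg (Eventually.of_forall fun s => norm_nonneg _) hgint ?_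
        filter_upwards [ae_restrict_of_ae_restrict_of_subset hsub hwM] with s hsM
        exact hF_bound _ _ hsM
      have hsplit : ∫ s in Set.Ioc (0:ℝ) t, K₁ * (1 + ‖ξ s‖)
          = K₁ * t + K₁ * ∫ s in Set.Ioc (0:ℝ) t, ‖ξ s‖ := by
        rw [integral_const_mul, integral_add h1int hnint]
        have : ∫ _s in Set.Ioc (0:ℝ) t, (1:ℝ) = t := by
          simp [Real.volume_Ioc, ENNReal.toReal_ofReal ht.1, ht.1]
        rw [this]; ring
      calc ‖ξ t‖ = ‖ξ₀ + ∫ s in Set.Ioc (0:ℝ) t, (f₀ (ξ s) + ∑ i, w s i • f i (ξ s))‖ := by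
            rw [← hode t ht]
        _ ≤ ‖ξ₀‖ + ‖∫ s in Set.Ioc (0:ℝ) t, (f₀ (ξ s) + ∑ i, w s i • f i (ξ s))‖ :=
            norm_add_le _ _
        _ ≤ A + ∫ s in Set.Ioc (0:ℝ) t, ‖f₀ (ξ s) + ∑ i, w s i • f i (ξ s)‖ :=
            add_le_add hξ₀ (norm_integral_le_integral_norm _)
        _ ≤ A + (K₁ * t + K₁ * ∫ s in Set.Ioc (0:ℝ) t, ‖ξ s‖) := by
            rw [← hsplit]; exact add_le_add_right hmono A
        _ ≤ (A + K₁ * T) + K₁ * ∫ s in Set.Ioc (0:ℝ) t, ‖ξ s‖ := by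
            have : K₁ * t ≤ K₁ * T := mul_le_mul_of_nonneg_left ht.2 hK₁0
            linarith
  have hxb : ∀ n, ∀ t ∈ Set.Icc (0:ℝ) T, ‖x n t‖ ≤ R := fun n =>
    traj_bound (u n) (x n) (x₀ n) (humeas n) (huM n) (hxcont n) (hA n) (hxode n)
  have hxlb : ∀ t ∈ Set.Icc (0:ℝ) T, ‖xlim t‖ ≤ R :=
    traj_bound ulim xlim xlim₀ hulim_meas hulM hxlimcont hAl hxlimode
  -- Lipschitz constants
  obtain ⟨K₀, hK₀0, hK₀⟩ := lipschitz_on_ball hf₀ R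
  choose Kf hKf0 hKf using fun i => lipschitz_on_ball (hf i) R
  have hKfsum : 0 ≤ ∑ i, Kf i := Finset.sum_nonneg fun i _ => hKf0 i
  set K₂ : ℝ := K₀ + M * ∑ i, Kf i with hK₂def
  have hK₂0 : 0 ≤ K₂ := by positivity
  -- bound on f i along the limit trajectory
  set B : ℝ := C * (1 + R) with hBdef
  have hB0 : 0 ≤ B := by positivity
  have hfB : ∀ s ∈ Set.Icc (0:ℝ) T, ∀ i, ‖f i (xlim s)‖ ≤ B := fun s hs i =>
    (hgrow i _).trans (by nlinarith [hxlb s hs])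
  -- the perturbation term
  set h : ℕ → ℝ → EuclideanSpace ℝ (Fin d) :=
    fun n s => ∑ i, (u n s i - ulim s i) • f i (xlim s) with hhdef
  set Bh : ℝ := m * (2 * M * B) with hBhdef
  have hBh0 : 0 ≤ Bh := by positivity
  have hh_aesm : ∀ n, AEStronglyMeasurable (h n) (volume.restrict (Set.Icc (0:ℝ) T)) := by
    intro n
    have hξm : AEStronglyMeasurable xlim (volume.restrict (Set.Icc (0:ℝ) T)) :=
      hxlimcont.aestronglyMeasurable measurableSet_Icc
    refine Finset.aestronglyMeasurable_fun_sum _ (fun i _ => ?_)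
    exact ((((measurable_pi_apply i).comp (humeas n)).sub
      ((measurable_pi_apply i).comp hulim_meas)).aestronglyMeasurable).smul
      (((hf i).continuous).comp_aestronglyMeasurable hξm)
  have hh_bound : ∀ n, ∀ᵐ s ∂(volume.restrict (Set.Icc (0:ℝ) T)), ‖h n s‖ ≤ Bh := by
    intro n
    filter_upwards [huM n, hulM, ae_restrict_mem measurableSet_Icc] with s h1 h2 hs
    calc ‖h n s‖ ≤ ∑ _i : Fin m, (2 * M * B) := by
          refine (norm_sum_le _ _).trans (Finset.sum_le_sum fun i _ => ?_)
          rw [norm_smul, Real.norm_eq_abs]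
          have h3 : |u n s i - ulim s i| ≤ 2 * M := by
            have e1 := abs_le.1 (h1 i)
            have e2 := abs_le.1 (h2 i)
            exact abs_le.2 ⟨by linarith, by linarith⟩
          exact mul_le_mul h3 (hfB s hs i) (norm_nonneg _) (by positivity)
      _ = Bh := by
          rw [Finset.sum_const, Finset.card_univ, Fintype.card_fin, nsmul_eq_mul, hBhdef]
  have hh_int : ∀ n, IntegrableOn (h n) (Set.Icc (0:ℝ) T) := fun n =>
    Integrable.mono' (integrable_const Bh) (hh_aesm n) (hh_bound n)
  set g : ℕ → ℝ → EuclideanSpace ℝ (Fin d) :=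
    fun n t => ∫ s in Set.Ioc (0:ℝ) t, h n s with hgdef
  have hg_cont : ∀ n, ContinuousOn (g n) (Set.Icc (0:ℝ) T) := fun n =>
    intervalIntegral.continuousOn_primitive (hh_int n)
  have hg_bound : ∀ n, ∀ t ∈ Set.Icc (0:ℝ) T, ‖g n t‖ ≤ Bh * T := by
    intro n t ht
    have hsub : Set.Ioc (0:ℝ) t ⊆ Set.Icc (0:ℝ) T := fun s hs => ⟨hs.1.le, hs.2.trans ht.2⟩
    calc ‖g n t‖ ≤ ∫ s in Set.Ioc (0:ℝ) t, ‖h n s‖ := norm_integral_le_integral_norm _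
      _ ≤ ∫ _s in Set.Ioc (0:ℝ) t, Bh := by
          refine integral_mono_of_nonneg (Eventually.of_forall fun s => norm_nonneg _)
            (integrableOn_const measure_Ioc_lt_top.ne) ?_
          exact ae_restrict_of_ae_restrict_of_subset hsub (hh_bound n)
      _ = t * Bh := by
          rw [setIntegral_const, Real.volume_real_Ioc_of_le ht.1, smul_eq_mul]
          norm_num [ENNReal.toReal_ofReal ht.1]
      _ ≤ Bh * T := by nlinarith [ht.2, hBh0, ht.1]
  -- pointwise convergence of g via weak convergence
  have hgT : ∀ t ∈ Set.Icc (0:ℝ) T, Tendsto (fun n => g n t) atTop (𝓝 0) := by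
    intro t ht
    have hsub : Set.Ioc (0:ℝ) t ⊆ Set.Icc (0:ℝ) T := fun s hs => ⟨hs.1.le, hs.2.trans ht.2⟩
    have hrr : (volume.restrict (Set.Icc (0:ℝ) T)).restrict (Set.Ioc (0:ℝ) t)
        = volume.restrict (Set.Ioc (0:ℝ) t) := by
      rw [Measure.restrict_restrict measurableSet_Ioc, Set.inter_eq_self_of_subset_left hsub]
    have hcomp : ∀ j : Fin d, Tendsto (fun n => g n t j) atTop (𝓝 0) := by
      intro j
      set V : ℝ → Fin m → ℝ := fun s i => f i (xlim s) j with hVdef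
      have hVicont : ∀ i, ContinuousOn (fun s => V s i) (Set.Icc (0:ℝ) T) := fun i =>
        ((EuclideanSpace.proj j).continuous.comp (hf i).continuous).comp_continuousOn hxlimcont
      have hVcont : ContinuousOn V (Set.Icc (0:ℝ) T) := continuousOn_pi.2 hVicont
      have hVaesm : AEStronglyMeasurable V (volume.restrict (Set.Icc (0:ℝ) T)) :=
        hVcont.aestronglyMeasurable measurableSet_Icc
      set v : ℝ → Fin m → ℝ := (Set.Ioc (0:ℝ) t).indicator V with hvdef
      have hVB : ∀ s ∈ Set.Icc (0:ℝ) T, ∀ i, |V s i| ≤ B := by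
        intro s hs i
        calc |V s i| = |f i (xlim s) j| := rfl
          _ ≤ ‖f i (xlim s)‖ := coord_abs_le_norm _ _
          _ ≤ B := hfB s hs i
      have hvmem : MemLp v 2 (volume.restrict (Set.Icc (0:ℝ) T)) := by
        refine MemLp.of_bound (hVaesm.indicator measurableSet_Ioc) B ?_
        filter_upwards [ae_restrict_mem measurableSet_Icc] with s hs
        by_cases hmem : s ∈ Set.Ioc (0:ℝ) t
        · rw [hvdef, Set.indicator_of_mem hmem, pi_norm_le_iff_of_nonneg hB0]
          intro i
          rw [Real.norm_eq_abs]
          exact hVB s hs i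
        · rw [hvdef, Set.indicator_of_notMem hmem]
          simpa using hB0
      have hw := hweak v hvmem
      have hrew : ∀ w' : ℝ → Fin m → ℝ,
          (∫ s in Set.Icc (0:ℝ) T, ∑ i, v s i * w' s i)
            = ∫ s in Set.Ioc (0:ℝ) t, ∑ i, V s i * w' s i := by
        intro w'
        have heq : (fun s => ∑ i, v s i * w' s i)
            = (Set.Ioc (0:ℝ) t).indicator (fun s => ∑ i, V s i * w' s i) := by
          funext s
          by_cases hmem : s ∈ Set.Ioc (0:ℝ) t
          · rw [Set.indicator_of_mem hmem]
            simp only [hvdef, Set.indicator_of_mem hmem]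
          · rw [Set.indicator_of_notMem hmem]
            simp only [hvdef, Set.indicator_of_notMem hmem]
            simp
        rw [heq, integral_indicator measurableSet_Ioc, hrr]
      have hw2 : Tendsto (fun n => ∫ s in Set.Ioc (0:ℝ) t, ∑ i, V s i * u n s i) atTop
          (𝓝 (∫ s in Set.Ioc (0:ℝ) t, ∑ i, V s i * ulim s i)) := by
        rw [← hrew ulim]
        exact Tendsto.congr (fun n => hrew (u n)) hw
      -- integrability of the scalar integrands
      haveI : IsFiniteMeasure (volume.restrict (Set.Ioc (0:ℝ) t)) :=
        ⟨by rw [Measure.restrict_apply_univ]; exact measure_Ioc_lt_top⟩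
      have hIgen : ∀ (w' : ℝ → Fin m → ℝ), Measurable w' →
          (∀ᵐ s ∂(volume.restrict (Set.Icc (0:ℝ) T)), ∀ i, |w' s i| ≤ M) →
          Integrable (fun s => ∑ i, V s i * w' s i) (volume.restrict (Set.Ioc (0:ℝ) t)) := by
        intro w' hw' hw'M
        have haesm : AEStronglyMeasurable (fun s => ∑ i, V s i * w' s i)
            (volume.restrict (Set.Ioc (0:ℝ) t)) := by
          refine Finset.aestronglyMeasurable_fun_sum _ (fun i _ => ?_)
          refine AEStronglyMeasurable.mul ?_ ((measurable_pi_apply i).comp hw').aestronglyMeasurable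
          exact ((hVicont i).aestronglyMeasurable measurableSet_Icc).mono_measure
            (Measure.restrict_mono hsub le_rfl)
        refine Integrable.mono' (integrable_const ((m : ℝ) * (B * M))) haesm ?_
        filter_upwards [ae_restrict_of_ae_restrict_of_subset hsub hw'M,
          ae_restrict_mem measurableSet_Ioc] with s hsM hsIoc
        rw [Real.norm_eq_abs]
        calc |∑ i, V s i * w' s i| ≤ ∑ i, |V s i * w' s i| := Finset.abs_sum_le_sum_abs _ _
          _ ≤ ∑ _i : Fin m, B * M := by
              refine Finset.sum_le_sum fun i _ => ?_
              rw [abs_mul]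
              exact mul_le_mul (hVB s (hsub hsIoc) i) (hsM i) (abs_nonneg _) hB0
          _ = (m : ℝ) * (B * M) := by
              rw [Finset.sum_const, Finset.card_univ, Fintype.card_fin, nsmul_eq_mul]
      have hIu : ∀ n, Integrable (fun s => ∑ i, V s i * u n s i)
          (volume.restrict (Set.Ioc (0:ℝ) t)) := fun n => hIgen (u n) (humeas n) (huM n)
      have hIul : Integrable (fun s => ∑ i, V s i * ulim s i)
          (volume.restrict (Set.Ioc (0:ℝ) t)) := hIgen ulim hulim_meas hulM
      -- identify the coordinate of g
      have hgj : ∀ n, g n t j = (∫ s in Set.Ioc (0:ℝ) t, ∑ i, V s i * u n s i)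
          - ∫ s in Set.Ioc (0:ℝ) t, ∑ i, V s i * ulim s i := by
        intro n
        have hint : Integrable (h n) (volume.restrict (Set.Ioc (0:ℝ) t)) :=
          (hh_int n).mono_set hsub
        have h1 : g n t j = ∫ s in Set.Ioc (0:ℝ) t,
            ∑ i, (u n s i - ulim s i) * V s i := by
          calc g n t j = (EuclideanSpace.proj j) (g n t) := rfl
            _ = ∫ s in Set.Ioc (0:ℝ) t, (EuclideanSpace.proj j) (h n s) :=
                (ContinuousLinearMap.integral_comp_comm _ hint).symm
            _ = ∫ s in Set.Ioc (0:ℝ) t, ∑ i, (u n s i - ulim s i) * V s i := by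
                refine integral_congr_ae (Eventually.of_forall fun s => ?_)
                rw [hhdef]
                simp only [map_sum, _root_.map_smul, smul_eq_mul]
                rfl
        rw [h1, ← integral_sub (hIu n) hIul]
        refine integral_congr_ae (Eventually.of_forall fun s => ?_)
        simp only [← Finset.sum_sub_distrib, sub_mul]
        refine Finset.sum_congr rfl fun i _ => ?_
        ring
      have hfin2 := hw2.sub_const (∫ s in Set.Ioc (0:ℝ) t, ∑ i, V s i * ulim s i)
      rw [sub_self] at hfin2
      exact Tendsto.congr (fun n => (hgj n).symm) hfin2
    -- assemble the vector convergence from componentwise convergence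
    have hnorm : Tendsto (fun n => ‖g n t‖) atTop (𝓝 0) := by
      have hsq : Tendsto (fun n => ∑ j : Fin d, ‖g n t j‖ ^ 2) atTop (𝓝 0) := by
        have hterm : ∀ j : Fin d, Tendsto (fun n => ‖g n t j‖ ^ 2) atTop (𝓝 0) := by
          intro j
          have := ((hcomp j).norm).pow 2
          simpa using this
        have := tendsto_finset_sum (Finset.univ : Finset (Fin d)) (fun j _ => hterm j)
        simpa using this
      have hsqrt := (Real.continuous_sqrt.tendsto 0).comp hsq
      rw [Real.sqrt_zero] at hsqrt
      refine Tendsto.congr (fun n => ?_) hsqrt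
      exact (EuclideanSpace.norm_eq (g n t)).symm
    exact tendsto_zero_iff_norm_tendsto_zero.2 hnorm
  -- L¹ convergence of g via dominated convergence
  set G : ℕ → ℝ := fun n => ∫ s in Set.Ioc (0:ℝ) T, ‖g n s‖ with hGdef
  have hG0 : Tendsto G atTop (𝓝 0) := by
    have hIocsub : Set.Ioc (0:ℝ) T ⊆ Set.Icc (0:ℝ) T := Set.Ioc_subset_Icc_self
    have key : Tendsto (fun n => ∫ s in Set.Ioc (0:ℝ) T, ‖g n s‖) atTop
        (𝓝 (∫ _s in Set.Ioc (0:ℝ) T, (0:ℝ))) := by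
      refine tendsto_integral_of_dominated_convergence (fun _ => Bh * T)
        (fun n => ?_) (integrable_const _) (fun n => ?_) ?_
      · exact ((continuous_norm.comp_continuousOn (hg_cont n)).aestronglyMeasurable
          measurableSet_Icc).mono_measure (Measure.restrict_mono hIocsub le_rfl)
      · filter_upwards [ae_restrict_mem measurableSet_Ioc] with s hs
        rw [norm_norm]
        exact hg_bound n s (hIocsub hs)
      · filter_upwards [ae_restrict_mem measurableSet_Ioc] with s hs
        simpa using (hgT s (hIocsub hs)).norm
    simpa using key
  -- main integral identity
  have hdiff : ∀ n, ∀ t ∈ Set.Icc (0:ℝ) T,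
      x n t - xlim t - g n t = (x₀ n - xlim₀) + ∫ s in Set.Ioc (0:ℝ) t,
        ((f₀ (x n s) - f₀ (xlim s)) + ∑ i, u n s i • (f i (x n s) - f i (xlim s))) := by
    intro n t ht
    have hsub : Set.Ioc (0:ℝ) t ⊆ Set.Icc (0:ℝ) T := fun s hs => ⟨hs.1.le, hs.2.trans ht.2⟩
    have hFn : IntegrableOn (fun s => f₀ (x n s) + ∑ i, u n s i • f i (x n s))
        (Set.Ioc (0:ℝ) t) :=
      (hF_int (u n) (x n) (humeas n) (huM n) (hxcont n)).mono_set hsub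
    have hFl : IntegrableOn (fun s => f₀ (xlim s) + ∑ i, ulim s i • f i (xlim s))
        (Set.Ioc (0:ℝ) t) :=
      (hF_int ulim xlim hulim_meas hulM hxlimcont).mono_set hsub
    have hhn : IntegrableOn (h n) (Set.Ioc (0:ℝ) t) := (hh_int n).mono_set hsub
    have hptwise : (fun s => (f₀ (x n s) - f₀ (xlim s))
          + ∑ i, u n s i • (f i (x n s) - f i (xlim s)))
        = fun s => ((f₀ (x n s) + ∑ i, u n s i • f i (x n s))
          - (f₀ (xlim s) + ∑ i, ulim s i • f i (xlim s))) - h n s := by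
      funext s
      simp only [hhdef, smul_sub, sub_smul, Finset.sum_sub_distrib]
      abel
    have hIeq : ∫ s in Set.Ioc (0:ℝ) t, ((f₀ (x n s) - f₀ (xlim s))
          + ∑ i, u n s i • (f i (x n s) - f i (xlim s)))
        = ((∫ s in Set.Ioc (0:ℝ) t, (f₀ (x n s) + ∑ i, u n s i • f i (x n s)))
          - ∫ s in Set.Ioc (0:ℝ) t, (f₀ (xlim s) + ∑ i, ulim s i • f i (xlim s)))
          - ∫ s in Set.Ioc (0:ℝ) t, h n s := by
      have hFnl : IntegrableOn (fun s => (f₀ (x n s) + ∑ i, u n s i • f i (x n s))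
          - (f₀ (xlim s) + ∑ i, ulim s i • f i (xlim s))) (Set.Ioc (0:ℝ) t) := hFn.sub hFl
      rw [hptwise, integral_sub hFnl hhn, integral_sub hFn hFl]
    have hg_eq : g n t = ∫ s in Set.Ioc (0:ℝ) t, h n s := rfl
    rw [hxode n t ht, hxlimode t ht, hg_eq, hIeq]
    abel
  -- Gronwall estimate
  set a : ℕ → ℝ := fun n => ‖x₀ n - xlim₀‖ with hadef
  have hzz : ∀ n, ∀ t ∈ Set.Icc (0:ℝ) T,
      ‖x n t - xlim t - g n t‖ ≤ (a n + K₂ * G n) * Real.exp (K₂ * t) := by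
    intro n
    have hcont2 : ContinuousOn (fun t => ‖x n t - xlim t - g n t‖) (Set.Icc (0:ℝ) T) :=
      continuous_norm.comp_continuousOn (((hxcont n).sub hxlimcont).sub (hg_cont n))
    refine gronwall_integral hK₂0 hT.le hcont2 (fun t _ => norm_nonneg _) ?_
    intro t ht
    have hsub : Set.Ioc (0:ℝ) t ⊆ Set.Icc (0:ℝ) T := fun s hs => ⟨hs.1.le, hs.2.trans ht.2⟩
    have hzint : IntegrableOn (fun s => ‖x n s - xlim s - g n s‖) (Set.Ioc (0:ℝ) t) :=
      (hcont2.integrableOn_compact isCompact_Icc).mono_set hsub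
    have hgnint : IntegrableOn (fun s => ‖g n s‖) (Set.Ioc (0:ℝ) t) :=
      ((continuous_norm.comp_continuousOn (hg_cont n)).integrableOn_compact
        isCompact_Icc).mono_set hsub
    have hyint : IntegrableOn (fun s => ‖x n s - xlim s‖) (Set.Ioc (0:ℝ) t) :=
      ((continuous_norm.comp_continuousOn ((hxcont n).sub hxlimcont)).integrableOn_compact
        isCompact_Icc).mono_set hsub
    have hGn_t : ∫ s in Set.Ioc (0:ℝ) t, ‖g n s‖ ≤ G n := by
      refine setIntegral_mono_set
        (((continuous_norm.comp_continuousOn (hg_cont n)).integrableOn_compact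
          isCompact_Icc).mono_set Set.Ioc_subset_Icc_self)
        (Eventually.of_forall fun s => norm_nonneg _)
        (HasSubset.Subset.eventuallyLE (Set.Ioc_subset_Ioc_right ht.2))
    have hwb : ∀ᵐ s ∂(volume.restrict (Set.Ioc (0:ℝ) t)),
        ‖(f₀ (x n s) - f₀ (xlim s)) + ∑ i, u n s i • (f i (x n s) - f i (xlim s))‖
          ≤ K₂ * ‖x n s - xlim s‖ := by
      filter_upwards [ae_restrict_of_ae_restrict_of_subset hsub (huM n),
        ae_restrict_mem measurableSet_Ioc] with s hsM hsIoc
      have hsI := hsub hsIoc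
      have hb1 : ‖f₀ (x n s) - f₀ (xlim s)‖ ≤ K₀ * ‖x n s - xlim s‖ :=
        hK₀ _ _ (hxb n s hsI) (hxlb s hsI)
      have hb2 : ‖∑ i, u n s i • (f i (x n s) - f i (xlim s))‖
          ≤ (M * ∑ i, Kf i) * ‖x n s - xlim s‖ := by
        refine (norm_sum_le _ _).trans ?_
        have hterm : ∀ i ∈ Finset.univ, ‖u n s i • (f i (x n s) - f i (xlim s))‖
            ≤ M * (Kf i * ‖x n s - xlim s‖) := fun i _ => by
          rw [norm_smul, Real.norm_eq_abs]
          exact mul_le_mul (hsM i) (hKf i _ _ (hxb n s hsI) (hxlb s hsI)) (norm_nonneg _) hM0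
        refine (Finset.sum_le_sum hterm).trans_eq ?_
        rw [← Finset.mul_sum, ← Finset.sum_mul]
        ring
      calc ‖(f₀ (x n s) - f₀ (xlim s)) + ∑ i, u n s i • (f i (x n s) - f i (xlim s))‖
          ≤ ‖f₀ (x n s) - f₀ (xlim s)‖ + ‖∑ i, u n s i • (f i (x n s) - f i (xlim s))‖ :=
            norm_add_le _ _
        _ ≤ K₀ * ‖x n s - xlim s‖ + (M * ∑ i, Kf i) * ‖x n s - xlim s‖ := add_le_add hb1 hb2
        _ = K₂ * ‖x n s - xlim s‖ := by rw [hK₂def]; ring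
    have hyz : ∀ s, ‖x n s - xlim s‖ ≤ ‖x n s - xlim s - g n s‖ + ‖g n s‖ := fun s => by
      calc ‖x n s - xlim s‖ = ‖(x n s - xlim s - g n s) + g n s‖ := by abel_nf
        _ ≤ _ := norm_add_le _ _
    calc ‖x n t - xlim t - g n t‖
        = ‖(x₀ n - xlim₀) + ∫ s in Set.Ioc (0:ℝ) t, ((f₀ (x n s) - f₀ (xlim s))
            + ∑ i, u n s i • (f i (x n s) - f i (xlim s)))‖ := by rw [hdiff n t ht]
      _ ≤ a n + ‖∫ s in Set.Ioc (0:ℝ) t, ((f₀ (x n s) - f₀ (xlim s))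
            + ∑ i, u n s i • (f i (x n s) - f i (xlim s)))‖ := norm_add_le _ _
      _ ≤ a n + ∫ s in Set.Ioc (0:ℝ) t, ‖(f₀ (x n s) - f₀ (xlim s))
            + ∑ i, u n s i • (f i (x n s) - f i (xlim s))‖ :=
          add_le_add_right (norm_integral_le_integral_norm _) _
      _ ≤ a n + ∫ s in Set.Ioc (0:ℝ) t, K₂ * ‖x n s - xlim s‖ :=
          add_le_add_right (integral_mono_of_nonneg
            (Eventually.of_forall fun s => norm_nonneg _) (hyint.const_mul K₂) hwb) _
      _ = a n + K₂ * ∫ s in Set.Ioc (0:ℝ) t, ‖x n s - xlim s‖ := by rw [integral_const_mul]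
      _ ≤ a n + K₂ * ∫ s in Set.Ioc (0:ℝ) t, (‖x n s - xlim s - g n s‖ + ‖g n s‖) := by
          refine add_le_add_right (mul_le_mul_of_nonneg_left ?_ hK₂0) _
          exact integral_mono hyint (hzint.add hgnint) fun s => hyz s
      _ = a n + K₂ * ((∫ s in Set.Ioc (0:ℝ) t, ‖x n s - xlim s - g n s‖)
            + ∫ s in Set.Ioc (0:ℝ) t, ‖g n s‖) := by rw [integral_add hzint hgnint]
      _ ≤ (a n + K₂ * G n) + K₂ * ∫ s in Set.Ioc (0:ℝ) t, ‖x n s - xlim s - g n s‖ := by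
          have h5 : K₂ * ∫ s in Set.Ioc (0:ℝ) t, ‖g n s‖ ≤ K₂ * G n :=
            mul_le_mul_of_nonneg_left hGn_t hK₂0
          linarith
  -- conclusion
  have hTmem : T ∈ Set.Icc (0:ℝ) T := ⟨hT.le, le_rfl⟩
  have hfinal : ∀ n, ‖x n T - xlim T‖ ≤ (a n + K₂ * G n) * Real.exp (K₂ * T) + ‖g n T‖ := by
    intro n
    have h1 := hzz n T hTmem
    calc ‖x n T - xlim T‖ = ‖(x n T - xlim T - g n T) + g n T‖ := by abel_nf
      _ ≤ ‖x n T - xlim T - g n T‖ + ‖g n T‖ := norm_add_le _ _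
      _ ≤ (a n + K₂ * G n) * Real.exp (K₂ * T) + ‖g n T‖ := by linarith
  have ha0 : Tendsto a atTop (𝓝 0) := tendsto_iff_norm_sub_tendsto_zero.1 hx₀
  have hgT0 : Tendsto (fun n => ‖g n T‖) atTop (𝓝 0) := by
    have := (hgT T hTmem).norm
    simpa using this
  rw [tendsto_iff_norm_sub_tendsto_zero]
  refine squeeze_zero (fun n => norm_nonneg _) hfinal ?_
  have hlim : Tendsto (fun n => (a n + K₂ * G n) * Real.exp (K₂ * T) + ‖g n T‖) atTop
      (𝓝 ((0 + K₂ * 0) * Real.exp (K₂ * T) + 0)) :=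
    ((ha0.add (hG0.const_mul K₂)).mul_const _).add hgT0
  simpa using hlim
end
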